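/- Let K be a nonempty set, 𝒜 the set of atoms of ℙ^K, X⁺ the free semigroup on 𝒜, and φ : X⁺ → ℙ^K the surjective semigroup homomorphism with φ(x_a) = a for each atom a. Let R ⊆ X⁺ × X⁺ be the set of pairs (x_a x_b, x_𝟙^m x_c) for atoms a, b, where m = μ(a+b) − 1 and c = a + b − m • 𝟙. Then the kernel congruence of φ equals the smallest congruence on X⁺ containing R; that is, ℙ^K has presentation ⟨X | R⟩ via φ. -/

import Mathlib

/-- The set of atoms of `ℙ^K`. -/
def PAtoms (K : Type*) : Type _ := {a : K → ℕ+ // ¬∃ b c : K → ℕ+, a = b + c}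

/-- `prependPow x m w` is the word `x^m * w`, i.e. `m` copies of the letter `x`
followed by the word `w` (just `w` when `m = 0`). -/
def prependPow {α : Type*} (x : α) : ℕ → FreeSemigroup α → FreeSemigroup α
  | 0, w => w
  | m + 1, w => FreeSemigroup.of x * prependPow x m w

/-- The set of relations `R`: the pairs `(x_a x_b, x_𝟙^m x_c)` where `a, b, c`
are atoms, `m = μ(a + b) - 1`, and `c = a + b - m • 𝟙`
(i.e. `a k + b k = m + c k` for all `k`).  Here `one` denotes the letter `x_𝟙`. -/
def PRel {K : Type*} (one : PAtoms K) (u v : FreeSemigroup (PAtoms K)) : Prop :=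
  ∃ (a b c : PAtoms K) (m : ℕ),
    m = (⨅ k : K, ((a.1 k : ℕ) + (b.1 k : ℕ))) - 1 ∧
    (∀ k : K, (a.1 k : ℕ) + (b.1 k : ℕ) = m + (c.1 k : ℕ)) ∧
    u = FreeSemigroup.of a * FreeSemigroup.of b ∧
    v = prependPow one m (FreeSemigroup.of c)


section
variable {K : Type*} [Nonempty K]

noncomputable def muN (f : K → ℕ+) : ℕ := ⨅ k, (f k : ℕ)

theorem muN_le (f : K → ℕ+) (k : K) : muN f ≤ (f k : ℕ) :=
  ciInf_le (OrderBot.bddBelow _) k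

theorem one_le_muN (f : K → ℕ+) : 1 ≤ muN f :=
  le_ciInf fun k => (f k).one_le

theorem muN_attained (f : K → ℕ+) : ∃ k, (f k : ℕ) = muN f := by
  have : muN f ∈ Set.range (fun k => (f k : ℕ)) := Nat.sInf_mem (Set.range_nonempty _)
  exact this

theorem iInf_add_const (g : K → ℕ) (m : ℕ) : (⨅ k, (g k + m)) = (⨅ k, g k) + m := by
  have h1 : (⨅ k, g k) ∈ Set.range g := Nat.sInf_mem (Set.range_nonempty _)
  obtain ⟨k0, hk0⟩ := h1
  apply le_antisymm
  · calc (⨅ k, (g k + m)) ≤ g k0 + m := ciInf_le (OrderBot.bddBelow _) k0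
    _ = (⨅ k, g k) + m := by rw [hk0]
  · exact le_ciInf fun k => Nat.add_le_add_right (ciInf_le (OrderBot.bddBelow _) k) m
end
set_option linter.unusedSectionVars false
section
variable {K : Type*} [Nonempty K]

theorem isAtom_of_exists_one {a : K → ℕ+} (h : ∃ k, (a k : ℕ) = 1) :
    ¬∃ b c : K → ℕ+, a = b + c := by
  rintro ⟨b, c, rfl⟩
  obtain ⟨k, hk⟩ := h
  have hb := (b k).pos
  have hc := (c k).pos
  simp only [Pi.add_apply, PNat.add_coe] at hk
  omega

theorem muN_eq_one_of_atom (a : PAtoms K) : muN a.1 = 1 := by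
  by_contra h
  have h2 : 2 ≤ muN a.1 := by have := one_le_muN a.1; omega
  apply a.2
  refine ⟨(fun _ => 1), (fun k => ⟨(a.1 k : ℕ) - 1, by have := muN_le a.1 k; omega⟩), ?_⟩
  funext k
  have := muN_le a.1 k
  apply PNat.coe_injective
  show (a.1 k : ℕ) = 1 + ((a.1 k : ℕ) - 1)
  omega

noncomputable def NFatom (f : K → ℕ+) : PAtoms K :=
  ⟨fun k => ⟨(f k : ℕ) - (muN f - 1), by
      have := muN_le f k; have := one_le_muN f; omega⟩,
   isAtom_of_exists_one (by
      obtain ⟨k0, hk0⟩ := muN_attained f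
      exact ⟨k0, by have := one_le_muN f; simp only [PNat.mk_coe]; omega⟩)⟩

theorem NFatom_coe (f : K → ℕ+) (k : K) :
    ((NFatom f).1 k : ℕ) = (f k : ℕ) - (muN f - 1) := rfl

noncomputable def NF (one : PAtoms K) (f : K → ℕ+) : FreeSemigroup (PAtoms K) :=
  prependPow one (muN f - 1) (FreeSemigroup.of (NFatom f))

end
section
variable {K : Type*} [Nonempty K]

noncomputable def phiK : FreeSemigroup (PAtoms K) →ₙ* Multiplicative (K → ℕ+) :=
  FreeSemigroup.lift (fun a : PAtoms K => Multiplicative.ofAdd a.1)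

noncomputable def tphi (u : FreeSemigroup (PAtoms K)) : K → ℕ+ :=
  Multiplicative.toAdd (phiK u)

theorem tphi_of (a : PAtoms K) : tphi (FreeSemigroup.of a) = a.1 := by
  simp [tphi, phiK]

theorem tphi_mul (u v : FreeSemigroup (PAtoms K)) : tphi (u * v) = tphi u + tphi v := by
  simp [tphi, map_mul]

variable (one : PAtoms K) (hone : one.1 = fun _ => 1)
include hone

theorem tphi_prependPow (m : ℕ) (w : FreeSemigroup (PAtoms K)) (k : K) :
    (tphi (prependPow one m w) k : ℕ) = m + (tphi w k : ℕ) := by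
  induction m with
  | zero => show (tphi w k : ℕ) = 0 + (tphi w k : ℕ); omega
  | succ n ih =>
    show (tphi (FreeSemigroup.of one * prependPow one n w) k : ℕ) = _
    rw [tphi_mul]
    simp only [Pi.add_apply, PNat.add_coe, tphi_of, hone, ih, PNat.one_coe]
    omega

theorem tphi_NF (f : K → ℕ+) : tphi (NF one f) = f := by
  funext k
  apply PNat.coe_injective
  rw [NF, tphi_prependPow one hone, tphi_of, NFatom_coe]
  have := muN_le f k; have := one_le_muN f
  omega
end
theorem prependPow_add {α : Type*} (x : α) (m n : ℕ) (w : FreeSemigroup α) :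
    prependPow x (m + n) w = prependPow x m (prependPow x n w) := by
  induction m with
  | zero => rw [Nat.zero_add]; rfl
  | succ p ih =>
    rw [Nat.succ_add]
    show FreeSemigroup.of x * prependPow x (p + n) w = _
    rw [ih]; rfl

section
variable {K : Type*} [Nonempty K] (one : PAtoms K) (hone : one.1 = fun _ => 1)

theorem cg_of {u v : FreeSemigroup (PAtoms K)} (h : PRel one u v) :
    conGen (PRel one) u v := ConGen.Rel.of u v h

include hone

theorem cg_comm (a : PAtoms K) :
    conGen (PRel one) (FreeSemigroup.of a * FreeSemigroup.of one)
      (FreeSemigroup.of one * FreeSemigroup.of a) := by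
  apply cg_of
  refine ⟨a, one, a, 1, ?_, ?_, rfl, rfl⟩
  · have h1 : ∀ k : K, (a.1 k : ℕ) + (one.1 k : ℕ) = (a.1 k : ℕ) + 1 := by
      intro k; rw [hone]; simp
    have h2 : (⨅ k : K, ((a.1 k : ℕ) + (one.1 k : ℕ))) = muN a.1 + 1 := by
      rw [iInf_congr h1, iInf_add_const]; rfl
    rw [h2, muN_eq_one_of_atom]
  · intro k; rw [hone]; simp only [PNat.one_coe]; omega

theorem cg_move (a : PAtoms K) (m : ℕ) (w : FreeSemigroup (PAtoms K)) :
    conGen (PRel one) (FreeSemigroup.of a * prependPow one m w)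
      (prependPow one m (FreeSemigroup.of a * w)) := by
  induction m with
  | zero => exact (conGen (PRel one)).refl _
  | succ n ih =>
    show conGen (PRel one) (FreeSemigroup.of a * (FreeSemigroup.of one * prependPow one n w))
      (FreeSemigroup.of one * prependPow one n (FreeSemigroup.of a * w))
    refine (conGen (PRel one)).trans ?_ ((conGen (PRel one)).mul
      ((conGen (PRel one)).refl (FreeSemigroup.of one)) ih)
    rw [← mul_assoc]
    refine (conGen (PRel one)).trans ((conGen (PRel one)).mul (cg_comm one hone a)
      ((conGen (PRel one)).refl (prependPow one n w))) ?_
    rw [mul_assoc]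
    exact (conGen (PRel one)).refl _

theorem cg_prepend_mono (m : ℕ) {u v : FreeSemigroup (PAtoms K)}
    (h : conGen (PRel one) u v) :
    conGen (PRel one) (prependPow one m u) (prependPow one m v) := by
  induction m with
  | zero => exact h
  | succ n ih => exact (conGen (PRel one)).mul ((conGen (PRel one)).refl _) ih

theorem cg_pair (a b : PAtoms K) :
    conGen (PRel one) (FreeSemigroup.of a * FreeSemigroup.of b) (NF one (a.1 + b.1)) := by
  apply cg_of
  refine ⟨a, b, NFatom (a.1 + b.1), muN (a.1 + b.1) - 1, ?_, ?_, rfl, rfl⟩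
  · show _ = _
    have : muN (a.1 + b.1) = ⨅ k : K, ((a.1 k : ℕ) + (b.1 k : ℕ)) :=
      iInf_congr (fun k => by simp [Pi.add_apply, PNat.add_coe])
    rw [this]
  · intro k
    rw [NFatom_coe]
    have h1 : muN (a.1 + b.1) ≤ ((a.1 + b.1) k : ℕ) := muN_le _ k
    have h2 : 1 ≤ muN (a.1 + b.1) := one_le_muN _
    simp only [Pi.add_apply, PNat.add_coe] at h1 ⊢
    omega
end
section
variable {K : Type*} [Nonempty K] (one : PAtoms K) (hone : one.1 = fun _ => 1)
include hone

theorem cg_step (a : PAtoms K) (g : K → ℕ+) :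
    conGen (PRel one) (FreeSemigroup.of a * NF one g) (NF one (a.1 + g)) := by
  have hA : ∀ k, ((a.1 + g) k : ℕ) = ((a.1 + (NFatom g).1) k : ℕ) + (muN g - 1) := by
    intro k
    simp only [Pi.add_apply, PNat.add_coe, NFatom_coe]
    have := muN_le g k; have := one_le_muN g
    omega
  have hmu : muN (a.1 + g) = muN (a.1 + (NFatom g).1) + (muN g - 1) := by
    rw [muN, iInf_congr hA, iInf_add_const]; rfl
  have hc : NFatom (a.1 + g) = NFatom (a.1 + (NFatom g).1) := by
    apply Subtype.ext
    funext k
    apply PNat.coe_injective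
    rw [NFatom_coe, NFatom_coe, hmu, hA k]
    have := muN_le (a.1 + (NFatom g).1) k
    have := one_le_muN (a.1 + (NFatom g).1)
    omega
  have hNF : NF one (a.1 + g) =
      prependPow one (muN g - 1) (NF one (a.1 + (NFatom g).1)) := by
    rw [NF, NF, hc]
    have h1 : muN (a.1 + g) - 1 = (muN g - 1) + (muN (a.1 + (NFatom g).1) - 1) := by
      have := one_le_muN (a.1 + (NFatom g).1); omega
    rw [h1, prependPow_add]
  rw [hNF]
  refine (conGen (PRel one)).trans (cg_move one hone a (muN g - 1) _) ?_
  exact cg_prepend_mono one hone (muN g - 1) (cg_pair one hone a (NFatom g))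

theorem cg_main (u : FreeSemigroup (PAtoms K)) :
    conGen (PRel one) u (NF one (tphi u)) := by
  induction u using FreeSemigroup.recOnMul with
  | ih1 a =>
    have h : NF one (tphi (FreeSemigroup.of a)) = FreeSemigroup.of a := by
      rw [tphi_of, NF, muN_eq_one_of_atom]
      show FreeSemigroup.of (NFatom a.1) = FreeSemigroup.of a
      congr 1
      apply Subtype.ext
      funext k
      apply PNat.coe_injective
      rw [NFatom_coe, muN_eq_one_of_atom]
      omega
    rw [h]
    exact (conGen (PRel one)).refl _
  | ih2 a w _ ihw =>
    have h1 : conGen (PRel one) (FreeSemigroup.of a * w)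
        (FreeSemigroup.of a * NF one (tphi w)) :=
      (conGen (PRel one)).mul ((conGen (PRel one)).refl _) ihw
    have h2 := cg_step one hone a (tphi w)
    have h3 : a.1 + tphi w = tphi (FreeSemigroup.of a * w) := by
      rw [tphi_mul, tphi_of]
    rw [h3] at h2
    exact (conGen (PRel one)).trans h1 h2
end


/-- **Theorem 5.** `ℙ^K` has presentation `⟨X | R⟩` via `φ`: the homomorphism
`φ` from the free semigroup on the atoms of `ℙ^K` to `ℙ^K` (regarded
multiplicatively) sending `x_a ↦ a` is surjective, and its kernel congruence is
the congruence generated by `R`. -/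
theorem presentation_PK {K : Type*} [Nonempty K]
    (one : PAtoms K) (hone : one.1 = fun _ => 1) :
    Function.Surjective
      (FreeSemigroup.lift (fun a : PAtoms K => Multiplicative.ofAdd a.1) :
        FreeSemigroup (PAtoms K) →ₙ* Multiplicative (K → ℕ+)) ∧
    Con.ker
      (FreeSemigroup.lift (fun a : PAtoms K => Multiplicative.ofAdd a.1) :
        FreeSemigroup (PAtoms K) →ₙ* Multiplicative (K → ℕ+)) =
    conGen (PRel one) := by
  constructor
  · intro f
    refine ⟨NF one (Multiplicative.toAdd f), ?_⟩
    exact Multiplicative.toAdd.injective (tphi_NF one hone (Multiplicative.toAdd f))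
  · apply le_antisymm
    · rw [Con.le_def]
      intro x y hxy
      have h : phiK x = phiK y := hxy
      have txy : tphi x = tphi y := congrArg Multiplicative.toAdd h
      have h2 := (conGen (PRel one)).symm (cg_main one hone y)
      rw [← txy] at h2
      exact (conGen (PRel one)).trans (cg_main one hone x) h2
    · apply Con.conGen_le.mpr
      rintro x y ⟨a, b, c, m, hm, hsum, rfl, rfl⟩
      show phiK _ = phiK _
      apply Multiplicative.toAdd.injective
      funext k
      apply PNat.coe_injective
      show (tphi (FreeSemigroup.of a * FreeSemigroup.of b) k : ℕ) =
        (tphi (prependPow one m (FreeSemigroup.of c)) k : ℕ)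
      rw [tphi_mul, tphi_of, tphi_of, tphi_prependPow one hone, tphi_of]
      simp only [Pi.add_apply, PNat.add_coe]
      exact hsum k
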